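/- Let M be an infinite set and S ⊆ M^m (m ≥ 2) a subset such that: (a) for every choice of m−1 coordinates fixed to arbitrary values, the set of values of the remaining coordinate lying in S is finite and nonempty; (b) for each i ≤ m, the projection of S forgetting the i-th coordinate is cofinite in M^{m−1}. Then S is not a finite union of boxes A₁ × ⋯ × A_m with Aⱼ ⊆ M. -/
import Mathlib


/-- If `S ⊆ M^m` (with `M` infinite, `m ≥ 2`) has all sections by `m-1` fixed
coordinates finite and nonempty, and all projections forgetting one coordinate
cofinite, then `S` is not a finite union of boxes `A₁ × ⋯ × A_m`. -/
theorem not_finite_union_of_boxes {M : Type*} [Infinite M] {m : ℕ} (hm : 2 ≤ m)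
    (S : Set (Fin m → M))
    (hsec : ∀ (i : Fin m) (a : Fin m → M),
      {x : M | Function.update a i x ∈ S}.Finite ∧
      {x : M | Function.update a i x ∈ S}.Nonempty)
    (hproj : ∀ i : Fin m,
      {g : {j : Fin m // j ≠ i} → M |
        g ∉ (fun (a : Fin m → M) (j : {j : Fin m // j ≠ i}) => a j.1) '' S}.Finite) :
    ¬ ∃ (k : ℕ) (A : Fin k → Fin m → Set M),
      S = ⋃ j, {a : Fin m → M | ∀ i, a i ∈ A j i} := by
  rintro ⟨k, A, hS⟩
  -- Each nonempty box has all factors finite, hence S is finite.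
  have hSfin : S.Finite := by
    rw [hS]
    apply Set.finite_iUnion
    intro j
    rcases Set.eq_empty_or_nonempty {a : Fin m → M | ∀ i, a i ∈ A j i} with h | ⟨a, ha⟩
    · simp [h]
    · have hfin : ∀ i, (A j i).Finite := by
        intro i
        apply (hsec i a).1.subset
        intro x hx
        rw [hS]
        refine Set.mem_setOf.mpr (Set.mem_iUnion.mpr ⟨j, fun i' => ?_⟩)
        by_cases h : i' = i
        · subst h; simpa using hx
        · rw [Function.update_of_ne h]; exact ha i'
      have : {a : Fin m → M | ∀ i, a i ∈ A j i} = Set.pi Set.univ (A j) := by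
        ext a; simp [Set.mem_pi]
      rw [this]
      exact Set.Finite.pi hfin
  -- Pick i = 0; the complement type is nonempty, so M^{m-1} is infinite.
  have h1 : (1 : ℕ) < m := hm
  set i : Fin m := ⟨0, by omega⟩
  have hne : Nonempty {j : Fin m // j ≠ i} := ⟨⟨⟨1, by omega⟩, by simp [i, Fin.ext_iff]⟩⟩
  have hinf : Infinite ({j : Fin m // j ≠ i} → M) := by
    obtain ⟨j0⟩ := hne
    exact Infinite.of_injective (fun x _ => x) (fun x y h => congrFun h j0)
  have himg : ((fun (a : Fin m → M) (j : {j : Fin m // j ≠ i}) => a j.1) '' S).Finite :=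
    hSfin.image _
  have : (Set.univ : Set ({j : Fin m // j ≠ i} → M)).Finite := by
    have := himg.union (hproj i)
    apply this.subset
    intro g _
    by_cases hg : g ∈ (fun (a : Fin m → M) (j : {j : Fin m // j ≠ i}) => a j.1) '' S
    · exact Or.inl hg
    · exact Or.inr hg
  exact Set.infinite_univ this
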